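/- A space X satisfies S1(C_Τ, C) if, and only if, for every continuous function Ψ : X → 2^(ℕ×ℕ), if the image Ψ[X] is a τ-family, then Ψ[X] is o-diagonalizable. -/

import Mathlib

open Set Filter Cardinal
open scoped Classical

noncomputable section

/-- The Cantor space `2^ℕ`. -/
abbrev Cantor := ℕ → Bool

/-- Arrays: elements of `2^(ℕ×ℕ)`. -/
abbrev Arr := ℕ × ℕ → Bool

/-- A γ-array: every row is eventually 1. -/
def IsGammaArray (A : Arr) : Prop := ∀ n, ∀ᶠ m in atTop, A (n, m) = true

/-- A γ-family: a set of γ-arrays. -/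
def GammaFamily (𝒜 : Set Arr) : Prop := ∀ A ∈ 𝒜, IsGammaArray A

/-- A family of arrays is finitely τ-diagonalizable. -/
def FinTauDiag (𝒜 : Set Arr) : Prop :=
  ∃ F : ℕ → Finset ℕ,
    (∀ A ∈ 𝒜, ∃ᶠ n in atTop, ∃ m ∈ F n, A (n, m) = true) ∧
    (∀ A ∈ 𝒜, ∀ B ∈ 𝒜,
      (∀ᶠ n in atTop, ∀ m ∈ F n, A (n, m) ≤ B (n, m)) ∨
      (∀ᶠ n in atTop, ∀ m ∈ F n, B (n, m) ≤ A (n, m)))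

/-- A family of arrays is semi τ-diagonalizable (via a partial function with domain `D`). -/
def SemiTauDiag (𝒜 : Set Arr) : Prop :=
  ∃ (D : Set ℕ) (g : ℕ → ℕ),
    (∀ A ∈ 𝒜, ∃ᶠ n in atTop, n ∈ D ∧ A (n, g n) = true) ∧
    (∀ A ∈ 𝒜, ∀ B ∈ 𝒜,
      (∀ᶠ n in atTop, n ∈ D → A (n, g n) ≤ B (n, g n)) ∨
      (∀ᶠ n in atTop, n ∈ D → B (n, g n) ≤ A (n, g n)))

/-- A τ-family of arrays. -/
def TauFamily (𝒜 : Set Arr) : Prop :=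
  (∀ A ∈ 𝒜, ∀ n, ∃ᶠ m in atTop, A (n, m) = true) ∧
  (∀ A ∈ 𝒜, ∀ B ∈ 𝒜, ∀ n,
    (∀ᶠ m in atTop, A (n, m) ≤ B (n, m)) ∨
    (∀ᶠ m in atTop, B (n, m) ≤ A (n, m)))

/-- A family of arrays is τ-diagonalizable. -/
def TauDiag (𝒜 : Set Arr) : Prop :=
  ∃ g : ℕ → ℕ,
    (∀ A ∈ 𝒜, ∃ᶠ n in atTop, A (n, g n) = true) ∧
    (∀ A ∈ 𝒜, ∀ B ∈ 𝒜,
      (∀ᶠ n in atTop, A (n, g n) ≤ B (n, g n)) ∨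
      (∀ᶠ n in atTop, B (n, g n) ≤ A (n, g n)))

/-- A family of arrays is o-diagonalizable. -/
def ODiag (𝒜 : Set Arr) : Prop :=
  ∃ g : ℕ → ℕ, ∀ A ∈ 𝒜, ∃ n, A (n, g n) = true

/-- An ω-family of arrays: rows frequently 1 and, for each `n`,
the family of the `n`-th rows is centered. -/
def OmegaFamily (𝒜 : Set Arr) : Prop :=
  (∀ A ∈ 𝒜, ∀ n, ∃ᶠ m in atTop, A (n, m) = true) ∧
  (∀ n, ∀ 𝒜' ⊆ 𝒜, 𝒜'.Finite → {m | ∀ A ∈ 𝒜', A (n, m) = true}.Infinite)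

/-- The bounding number 𝔟. -/
def bNum : Cardinal :=
  sInf {c | ∃ F : Set (ℕ → ℕ), Cardinal.mk F = c ∧
    ¬ ∃ g : ℕ → ℕ, ∀ f ∈ F, ∀ᶠ n in atTop, f n ≤ g n}

/-- The splitting number 𝔰. -/
def sNum : Cardinal :=
  sInf {c | ∃ S : Set (Set ℕ), Cardinal.mk S = c ∧ (∀ s ∈ S, s.Infinite) ∧
    ∀ a : Set ℕ, a.Infinite → ∃ s ∈ S, (a ∩ s).Infinite ∧ (a \ s).Infinite}

/-- The tower number 𝔱. -/
def tNum : Cardinal :=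
  sInf {c | ∃ T : Set (Set ℕ), Cardinal.mk T = c ∧ (∀ t ∈ T, t.Infinite) ∧
    (∀ a ∈ T, ∀ b ∈ T, (a \ b).Finite ∨ (b \ a).Finite) ∧
    ¬ ∃ a : Set ℕ, a.Infinite ∧ ∀ t ∈ T, (a \ t).Finite}

/-- cov(M): the least number of meager sets covering the Baire space. -/
def covM : Cardinal :=
  sInf {c | ∃ 𝒞 : Set (Set (ℕ → ℕ)), Cardinal.mk 𝒞 = c ∧
    (∀ M ∈ 𝒞, IsMeagre M) ∧ ⋃₀ 𝒞 = Set.univ}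

/-- The o-diagonalization number: the minimal cardinality of a τ-family
which is not o-diagonalizable. -/
def odNum : Cardinal :=
  sInf {c | ∃ 𝒜 : Set Arr, Cardinal.mk 𝒜 = c ∧ TauFamily 𝒜 ∧ ¬ ODiag 𝒜}

section Covers

variable (α : Type*)

/-- A countable cover of the space `α`. -/
def CountCover (𝒰 : Set (Set α)) : Prop :=
  𝒰.Countable ∧ ⋃₀ 𝒰 = Set.univ ∧ Set.univ ∉ 𝒰

/-- A (countable) γ-cover. -/
def GammaCover (𝒰 : Set (Set α)) : Prop :=
  CountCover α 𝒰 ∧ 𝒰.Infinite ∧ ∀ x : α, {U | U ∈ 𝒰 ∧ x ∉ U}.Finite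

/-- A (countable) τ-cover. -/
def TauCover (𝒰 : Set (Set α)) : Prop :=
  CountCover α 𝒰 ∧ (∀ x : α, {U | U ∈ 𝒰 ∧ x ∈ U}.Infinite) ∧
  ∀ x y : α, {U | U ∈ 𝒰 ∧ x ∈ U ∧ y ∉ U}.Finite ∨ {U | U ∈ 𝒰 ∧ y ∈ U ∧ x ∉ U}.Finite

/-- A (countable) ω-cover. -/
def OmegaCover (𝒰 : Set (Set α)) : Prop :=
  CountCover α 𝒰 ∧ ∀ F : Set α, F.Finite → ∃ U ∈ 𝒰, F ⊆ U

variable [TopologicalSpace α]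

/-- All members are open. -/
def OpenFam (𝒰 : Set (Set α)) : Prop := ∀ U ∈ 𝒰, IsOpen U

/-- All members are clopen. -/
def ClopenFam (𝒰 : Set (Set α)) : Prop := ∀ U ∈ 𝒰, IsClopen U

/-- The class O of countable open covers. -/
def OCov (𝒰 : Set (Set α)) : Prop := CountCover α 𝒰 ∧ OpenFam α 𝒰
/-- The class Γ of countable open γ-covers. -/
def OGamma (𝒰 : Set (Set α)) : Prop := GammaCover α 𝒰 ∧ OpenFam α 𝒰
/-- The class Τ of countable open τ-covers. -/
def OTau (𝒰 : Set (Set α)) : Prop := TauCover α 𝒰 ∧ OpenFam α 𝒰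
/-- The class Ω of countable open ω-covers. -/
def OOmega (𝒰 : Set (Set α)) : Prop := OmegaCover α 𝒰 ∧ OpenFam α 𝒰

/-- The class C of countable clopen covers. -/
def KCov (𝒰 : Set (Set α)) : Prop := CountCover α 𝒰 ∧ ClopenFam α 𝒰
/-- The class C_Γ of countable clopen γ-covers. -/
def KGamma (𝒰 : Set (Set α)) : Prop := GammaCover α 𝒰 ∧ ClopenFam α 𝒰
/-- The class C_Τ of countable clopen τ-covers. -/
def KTau (𝒰 : Set (Set α)) : Prop := TauCover α 𝒰 ∧ ClopenFam α 𝒰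

end Covers

/-- The selection principle S1(𝒜,ℬ). -/
def S1 (α : Type*) (𝒜 ℬ : Set (Set α) → Prop) : Prop :=
  ∀ U : ℕ → Set (Set α), (∀ n, 𝒜 (U n)) →
    ∃ V : ℕ → Set α, (∀ n, V n ∈ U n) ∧ ℬ (range V)

/-- The selection principle Sfin(𝒜,ℬ). -/
def SFin (α : Type*) (𝒜 ℬ : Set (Set α) → Prop) : Prop :=
  ∀ U : ℕ → Set (Set α), (∀ n, 𝒜 (U n)) →
    ∃ F : ℕ → Set (Set α), (∀ n, (F n).Finite ∧ F n ⊆ U n) ∧ ℬ (⋃ n, F n)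

/-- The selection principle Ufin(𝒜,ℬ). -/
def UFin (α : Type*) (𝒜 ℬ : Set (Set α) → Prop) : Prop :=
  ∀ U : ℕ → Set (Set α), (∀ n, 𝒜 (U n)) →
    (∀ n, ¬ ∃ F : Set (Set α), F ⊆ U n ∧ F.Finite ∧ ⋃₀ F = Set.univ) →
    ∃ F : ℕ → Set (Set α), (∀ n, (F n).Finite ∧ F n ⊆ U n) ∧
      ℬ (range fun n => ⋃₀ F n)

/-- The critical cardinality non(P) of a property `P` of sets of reals:
the minimal cardinality of an infinite subset of the Cantor space not satisfying `P`. -/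
def nonP (P : Set Cantor → Prop) : Cardinal :=
  sInf {c | ∃ X : Set Cantor, X.Infinite ∧ ¬ P X ∧ Cardinal.mk X = c}

/-- The collection of cardinalities of witnessing families of `f`-sequences for `θ_f`. -/
def ThetaSet (f : ℕ → ℕ) : Set Cardinal :=
  {c | ∃ ℱ : Set (ℕ → Set ℕ), Cardinal.mk ℱ = c ∧
    (∀ σ ∈ ℱ, ∀ n, σ n ⊆ Iio (f n)) ∧
    (∀ σ ∈ ℱ, ∀ᶠ n in atTop, (σ n).Nonempty) ∧
    (∀ σ ∈ ℱ, ∀ η ∈ ℱ, (∀ᶠ n in atTop, σ n ⊆ η n) ∨ (∀ᶠ n in atTop, η n ⊆ σ n)) ∧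
    ¬ ∃ g : ℕ → ℕ, ∀ σ ∈ ℱ, ∃ n, g n ∈ σ n}

/-- The cardinal θ_f; equal to 𝔠⁺ if no witnessing family exists. -/
def theta (f : ℕ → ℕ) : Cardinal :=
  if (ThetaSet f).Nonempty then sInf (ThetaSet f) else Order.succ Cardinal.continuum

/-- θ* = min over f (with all values ≥ 2) of θ_f. -/
def thetaStar : Cardinal :=
  sInf {c | ∃ f : ℕ → ℕ, (∀ n, 2 ≤ f n) ∧ theta f = c}

/-- The collection of cardinalities of witnessing families for `𝔈_f`. -/
def ESet (f : ℕ → ℕ) : Set Cardinal :=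
  {c | ∃ F : Set (ℕ → ℕ), Cardinal.mk F = c ∧ (∀ h ∈ F, ∀ n, h n < f n) ∧
    ∀ g : ℕ → ℕ, ∃ h ∈ F, ∀ n, h n ≠ g n}

/-- The cardinal 𝔈_f; equal to 𝔠⁺ if no witnessing family exists. -/
def ENum (f : ℕ → ℕ) : Cardinal :=
  if (ESet f).Nonempty then sInf (ESet f) else Order.succ Cardinal.continuum

/-- 𝔈* = min over f (with all values ≥ 1) of 𝔈_f. -/
def EStar : Cardinal :=
  sInf {c | ∃ f : ℕ → ℕ, (∀ n, 1 ≤ f n) ∧ ENum f = c}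


private lemma freq_iff_infinite {p : ℕ → Prop} :
    (∃ᶠ m in atTop, p m) ↔ {m | p m}.Infinite := by
  rw [← Nat.cofinite_eq_atTop, Filter.frequently_cofinite_iff_infinite]

private lemma ev_iff_finite {p : ℕ → Prop} :
    (∀ᶠ m in atTop, p m) ↔ {m | ¬ p m}.Finite := by
  rw [← Nat.cofinite_eq_atTop, Filter.eventually_cofinite]

private lemma bool_not_le {a b : Bool} : ¬ (a ≤ b) ↔ (a = true ∧ b = false) := by
  cases a <;> cases b <;> simp

private lemma exists_enum {α : Type*} {S : Set α} (hc : S.Countable) (hi : S.Infinite) :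
    ∃ f : ℕ → α, Function.Injective f ∧ Set.range f = S := by
  haveI := hc.to_subtype
  haveI := hi.to_subtype
  haveI : Encodable S := Encodable.ofCountable _
  haveI : Denumerable S := Denumerable.ofEncodableOfInfinite _
  refine ⟨fun k => ((Denumerable.eqv S).symm k : α), ?_, ?_⟩
  · exact Subtype.coe_injective.comp (Denumerable.eqv S).symm.injective
  · ext a
    constructor
    · rintro ⟨k, rfl⟩; exact ((Denumerable.eqv S).symm k).2
    · intro ha; exact ⟨Denumerable.eqv S ⟨a, ha⟩, by simp⟩

private lemma key_mem_infinite {α : Type*} (A : α → ℕ → Bool)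
    (hfreq : ∀ z, {m | A z m = true}.Infinite)
    (htau : ∀ z w, {m | ¬ (A z m ≤ A w m)}.Finite ∨ {m | ¬ (A w m ≤ A z m)}.Finite)
    (huniv : ∀ m, {z | A z m = true} ≠ Set.univ) (x : α) :
    {W | W ∈ Set.range (fun m => {z | A z m = true}) ∧ x ∈ W}.Infinite := by
  set U : ℕ → Set α := fun m => {z | A z m = true} with hUdef
  by_contra hfin
  rw [Set.not_infinite] at hfin
  set 𝒮 : Set (Set α) := {W | W ∈ Set.range U ∧ x ∈ W} with h𝒮
  set I : Set α → Set ℕ := fun W => {m | U m = W} with hIdef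
  have hT : {m | A x m = true}.Infinite := hfreq x
  have hTsub : {m | A x m = true} ⊆ ⋃ W ∈ 𝒮, I W := by
    intro m hm
    exact Set.mem_biUnion (show U m ∈ 𝒮 from ⟨⟨m, rfl⟩, hm⟩) rfl
  have hrich : ∃ W ∈ 𝒮, (I W).Infinite := by
    by_contra hc
    push_neg at hc
    exact hT (Set.Finite.subset
      (Set.Finite.biUnion hfin (fun W hW => hc W hW)) hTsub)
  set ℛ : Set (Set α) := {W | W ∈ 𝒮 ∧ (I W).Infinite} with hℛ
  have hRfin : ℛ.Finite := hfin.subset (fun W hW => hW.1)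
  have hRne : ℛ.Nonempty := by
    obtain ⟨W, hW, hWi⟩ := hrich
    exact ⟨W, hW, hWi⟩
  have hchain : ∀ W ∈ ℛ, ∀ W' ∈ ℛ, W ⊆ W' ∨ W' ⊆ W := by
    intro W hW W' hW'
    by_contra hcon
    push_neg at hcon
    obtain ⟨u, hu, hu'⟩ := Set.not_subset.mp hcon.1
    obtain ⟨w, hw, hw'⟩ := Set.not_subset.mp hcon.2
    rcases htau u w with h | h
    · apply hW.2
      apply h.subset
      intro m hm
      have h1 : A u m = true := by
        have : u ∈ U m := hm ▸ hu
        exact this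
      have h2 : A w m = false := by
        have h3 : ¬ (A w m = true) := fun hc => hw' (by rw [← hm]; exact hc)
        simpa using h3
      simp [bool_not_le, h1, h2]
    · apply hW'.2
      apply h.subset
      intro m hm
      have h1 : A w m = true := by
        have : w ∈ U m := hm ▸ hw
        exact this
      have h2 : A u m = false := by
        have h3 : ¬ (A u m = true) := fun hc => hu' (by rw [← hm]; exact hc)
        simpa using h3
      simp [bool_not_le, h1, h2]
  obtain ⟨M, hM, hMmax⟩ := Set.Finite.exists_maximalFor id ℛ hRfin hRne
  have hMtop : ∀ W ∈ ℛ, W ⊆ M := by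
    intro W hW
    rcases hchain W hW M hM with h | h
    · exact h
    · have heq : M = W := subset_antisymm h (hMmax hW h)
      rw [heq]
  have hxM : x ∈ M := hM.1.2
  have hMne : M ≠ Set.univ := by
    obtain ⟨m, hm⟩ := hM.1.1
    exact hm ▸ huniv m
  obtain ⟨v, hv⟩ := (Set.ne_univ_iff_exists_notMem M).mp hMne
  have hEfin : {m | ¬ (A v m ≤ A x m)}.Finite := by
    rcases htau x v with h | h
    · exfalso
      apply hM.2
      apply h.subset
      intro m hm
      have h1 : A x m = true := show x ∈ U m from hm ▸ hxM
      have h2 : A v m = false := by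
        have h3 : ¬ (A v m = true) := fun hc => hv (by rw [← hm]; exact hc)
        simpa using h3
      simp [bool_not_le, h1, h2]
    · exact h
  apply hfreq v
  have hsub : {m | A v m = true} ⊆
      {m | ¬ (A v m ≤ A x m)} ∪ ⋃ W ∈ 𝒮, (I W ∩ {m | A v m = true}) := by
    intro m hm
    by_cases hx' : A x m = true
    · right
      exact Set.mem_biUnion (show U m ∈ 𝒮 from ⟨⟨m, rfl⟩, hx'⟩) ⟨rfl, hm⟩
    · left
      have h2 : A x m = false := by simpa using hx'
      simp [bool_not_le, Set.mem_setOf_eq.mp hm, h2]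
  refine Set.Finite.subset (Set.Finite.union hEfin (Set.Finite.biUnion hfin ?_)) hsub
  intro W hW
  by_cases hWr : (I W).Infinite
  · have hWM : W ⊆ M := hMtop W ⟨hW, hWr⟩
    have hempty : I W ∩ {m | A v m = true} = ∅ := by
      ext m
      simp only [Set.mem_inter_iff, Set.mem_setOf_eq, Set.mem_empty_iff_false, iff_false,
        not_and]
      intro hUm hvm
      exact hv (hWM (hUm ▸ (show v ∈ U m from hvm)))
    rw [hempty]
    exact Set.finite_empty
  · exact (Set.not_infinite.mp hWr).inter_of_left _

/-- A space satisfies S1(C_Τ,C) iff every continuous image in `2^(ℕ×ℕ)`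
which is a τ-family is o-diagonalizable. -/
theorem stmt13 (X : Set Cantor) (hX : X.Infinite) :
    S1 ↥X (KTau ↥X) (KCov ↥X) ↔
      ∀ Ψ : ↥X → Arr, Continuous Ψ → TauFamily (range Ψ) → ODiag (range Ψ) := by
  constructor
  · -- S1 implies the image property
    intro hS1 Ψ hΨ hτ
    set U : ℕ → ℕ → Set ↥X := fun n m => {x | Ψ x (n, m) = true} with hUdef
    have hclopen : ∀ n m, IsClopen (U n m) := by
      intro n m
      have hc : Continuous fun x : ↥X => Ψ x (n, m) := (continuous_apply (n, m)).comp hΨ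
      exact (isClopen_discrete {true}).preimage hc
    by_cases hu : ∃ n m, U n m = Set.univ
    · obtain ⟨n₀, m₀, h⟩ := hu
      refine ⟨fun _ => m₀, ?_⟩
      rintro A ⟨x, rfl⟩
      exact ⟨n₀, Set.eq_univ_iff_forall.mp h x⟩
    · push_neg at hu
      have hfreqx : ∀ (x : ↥X) n, {m | Ψ x (n, m) = true}.Infinite :=
        fun x n => freq_iff_infinite.mp (hτ.1 (Ψ x) ⟨x, rfl⟩ n)
      have htau2 : ∀ n, ∀ z w : ↥X,
          {m | ¬ (Ψ z (n, m) ≤ Ψ w (n, m))}.Finite ∨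
          {m | ¬ (Ψ w (n, m) ≤ Ψ z (n, m))}.Finite := by
        intro n z w
        rcases hτ.2 (Ψ z) ⟨z, rfl⟩ (Ψ w) ⟨w, rfl⟩ n with h | h
        · exact Or.inl (ev_iff_finite.mp h)
        · exact Or.inr (ev_iff_finite.mp h)
      have hKT : ∀ n, KTau ↥X (Set.range (U n)) := by
        intro n
        refine ⟨⟨⟨Set.countable_range _, ?_, ?_⟩, ?_, ?_⟩, ?_⟩
        · apply Set.eq_univ_iff_forall.mpr
          intro x
          obtain ⟨m, hm⟩ := (hfreqx x n).nonempty
          exact ⟨U n m, ⟨m, rfl⟩, hm⟩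
        · rintro ⟨m, hm⟩
          exact hu n m hm
        · intro x
          exact key_mem_infinite (fun z m => Ψ z (n, m)) (fun z => hfreqx z n)
            (htau2 n) (fun m => hu n m) x
        · intro x y
          rcases htau2 n x y with h | h
          · left
            refine Set.Finite.subset (h.image (U n)) ?_
            rintro W ⟨⟨m, rfl⟩, hxW, hyW⟩
            refine ⟨m, ?_, rfl⟩
            have h2 : Ψ y (n, m) = false := by
              have h3 : ¬ (Ψ y (n, m) = true) := fun hc => hyW hc
              simpa using h3
            simp [bool_not_le, Set.mem_setOf_eq.mp hxW, h2]
          · right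
            refine Set.Finite.subset (h.image (U n)) ?_
            rintro W ⟨⟨m, rfl⟩, hyW, hxW⟩
            refine ⟨m, ?_, rfl⟩
            have h2 : Ψ x (n, m) = false := by
              have h3 : ¬ (Ψ x (n, m) = true) := fun hc => hxW hc
              simpa using h3
            simp [bool_not_le, Set.mem_setOf_eq.mp hyW, h2]
        · rintro W ⟨m, rfl⟩
          exact hclopen n m
      obtain ⟨V, hV1, hV2⟩ := hS1 _ hKT
      choose g hg using hV1
      refine ⟨g, ?_⟩
      rintro A ⟨x, rfl⟩
      have hx : x ∈ ⋃₀ Set.range V := by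
        rw [hV2.1.2.1]
        exact Set.mem_univ x
      obtain ⟨W, ⟨n, rfl⟩, hxW⟩ := hx
      refine ⟨n, ?_⟩
      rw [← hg n] at hxW
      exact hxW
  · -- the image property implies S1
    intro h U hU
    haveI := hX.to_subtype
    obtain ⟨x₀⟩ : Nonempty ↥X := inferInstance
    have hinf : ∀ n, (U n).Infinite := fun n =>
      ((hU n).1.2.1 x₀).mono (fun W hW => hW.1)
    have henum : ∀ n, ∃ f : ℕ → Set ↥X, Function.Injective f ∧ Set.range f = U n :=
      fun n => exists_enum (hU n).1.1.1 (hinf n)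
    choose e hinj hrange using henum
    have hemem : ∀ n m, e n m ∈ U n := fun n m => (hrange n) ▸ Set.mem_range_self m
    set Ψ : ↥X → Arr := fun x p => (e p.1 p.2).boolIndicator x with hΨdef
    have hmem : ∀ (x : ↥X) (n m : ℕ), Ψ x (n, m) = true ↔ x ∈ e n m :=
      fun x n m => ((e n m).mem_iff_boolIndicator x).symm
    have hcont : Continuous Ψ := by
      apply continuous_pi
      intro p
      exact (continuous_boolIndicator_iff_isClopen _).mpr ((hU p.1).2 _ (hemem p.1 p.2))
    have htf : TauFamily (Set.range Ψ) := by
      constructor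
      · rintro A ⟨x, rfl⟩ n
        rw [freq_iff_infinite]
        have h1 : {W | W ∈ U n ∧ x ∈ W}.Infinite := (hU n).1.2.1 x
        have h2 : ((e n) ⁻¹' {W | W ∈ U n ∧ x ∈ W}).Infinite :=
          h1.preimage (by rw [hrange n]; exact fun W hW => hW.1)
        apply h2.mono
        intro m hm
        exact (hmem x n m).mpr hm.2
      · rintro A ⟨x, rfl⟩ B ⟨y, rfl⟩ n
        rcases (hU n).1.2.2 x y with hfin | hfin
        · left
          rw [ev_iff_finite]
          refine Set.Finite.subset (hfin.preimage ((hinj n).injOn)) ?_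
          intro m hm
          rw [Set.mem_setOf_eq, bool_not_le] at hm
          refine ⟨hemem n m, (hmem x n m).mp hm.1, ?_⟩
          intro hy
          rw [(hmem y n m).mpr hy] at hm
          exact absurd hm.2 (by simp)
        · right
          rw [ev_iff_finite]
          refine Set.Finite.subset (hfin.preimage ((hinj n).injOn)) ?_
          intro m hm
          rw [Set.mem_setOf_eq, bool_not_le] at hm
          refine ⟨hemem n m, (hmem y n m).mp hm.1, ?_⟩
          intro hx'
          rw [(hmem x n m).mpr hx'] at hm
          exact absurd hm.2 (by simp)
    obtain ⟨g, hg⟩ := h Ψ hcont htf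
    refine ⟨fun n => e n (g n), fun n => hemem n (g n), ⟨⟨Set.countable_range _, ?_, ?_⟩, ?_⟩⟩
    · apply Set.eq_univ_iff_forall.mpr
      intro x
      obtain ⟨n, hn⟩ := hg (Ψ x) ⟨x, rfl⟩
      exact ⟨e n (g n), ⟨n, rfl⟩, (hmem x n (g n)).mp hn⟩
    · rintro ⟨n, hn⟩
      exact (hU n).1.1.2.2 (hn ▸ hemem n (g n))
    · rintro W ⟨n, rfl⟩
      exact (hU n).2 _ (hemem n (g n))


end
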